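/- arXiv:2204.03135 — 2 statements merged into one kernel-verified Lean document; each statement's English description precedes it below -/
import Mathlib

section
/- Let n ≥ 2, let 2 ≤ k ≤ n, α > 0 and N₀ > 0. Suppose λ = (λ₁,…,λ_n) ∈ Γ_k with λ₁ ≥ λ₂ ≥ ⋯ ≥ λ_n and S_k(λ) ≤ N₀. Then λ_{k−1} ≤ (N₀/α)^{1/(k−1)} and λ_n > −K₀, where K₀ := (n − k)(N₀/α)^{1/(k−1)} (in particular λ_n > −K₀' for any K₀' ≥ (n−k)(N₀/α)^{1/(k−1)}). -/
open scoped BigOperators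

/-- The `k`-th elementary symmetric polynomial `σ_k(λ)` of `λ ∈ ℝⁿ`, indexed by `k : ℤ`,
with the conventions `σ₀ = 1` and `σ_k = 0` for `k < 0` or `k > n`. -/
noncomputable def esymmZ (n : ℕ) (k : ℤ) (lam : Fin n → ℝ) : ℝ :=
  if k < 0 then 0 else ∑ s ∈ Finset.univ.powersetCard k.toNat, ∏ i ∈ s, lam i

/-- `S_k(λ) := σ_k(λ) + α σ_{k-1}(λ)`. -/
noncomputable def SZ (n : ℕ) (α : ℝ) (k : ℤ) (lam : Fin n → ℝ) : ℝ :=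
  esymmZ n k lam + α * esymmZ n (k - 1) lam

/-- The Garding cone `Γ_m = {λ ∈ ℝⁿ : σ_j(λ) > 0 for j = 1,…,m}` (so `Γ₀ = ℝⁿ`). -/
def Gamma (n : ℕ) (m : ℕ) : Set (Fin n → ℝ) :=
  {lam | ∀ j : ℕ, 1 ≤ j → j ≤ m → 0 < esymmZ n j lam}

/-- `Γ̃_k := Γ_{k-1} ∩ {λ : S_k(λ) > 0}`. -/
def GammaTilde (n : ℕ) (α : ℝ) (k : ℕ) : Set (Fin n → ℝ) :=
  Gamma n (k - 1) ∩ {lam | 0 < SZ n α k lam}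

/-- `σ_k(λ|i)`: the `k`-th elementary symmetric polynomial of the vector obtained
from `λ` by deleting the entry `λ_i`. -/
noncomputable def esymmDel (n : ℕ) (k : ℤ) (lam : Fin n → ℝ) (i : Fin n) : ℝ :=
  if k < 0 then 0 else
    ∑ s ∈ (Finset.univ.erase i).powersetCard k.toNat, ∏ j ∈ s, lam j

/-- `S_k(λ|i) := σ_k(λ|i) + α σ_{k-1}(λ|i)`.  In particular
`S_k^{ii}(λ) = ∂S_k/∂λ_i = S_{k-1}(λ|i) = SDel n α (k-1) lam i`. -/
noncomputable def SDel (n : ℕ) (α : ℝ) (k : ℤ) (lam : Fin n → ℝ) (i : Fin n) : ℝ :=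
  esymmDel n k lam i + α * esymmDel n (k - 1) lam i

/-- `σ_k(λ|pq)`: the `k`-th elementary symmetric polynomial of the vector obtained
from `λ` by deleting the entries `λ_p` and `λ_q`. -/
noncomputable def esymmDel2 (n : ℕ) (k : ℤ) (lam : Fin n → ℝ) (p q : Fin n) : ℝ :=
  if k < 0 then 0 else
    ∑ s ∈ ((Finset.univ.erase p).erase q).powersetCard k.toNat, ∏ l ∈ s, lam l

/-- `S_k^{pp,qq}(λ) = ∂²S_k/∂λ_p∂λ_q`, which equals
`σ_{k-2}(λ|pq) + α σ_{k-3}(λ|pq)` for `p ≠ q`, and `0` for `p = q`. -/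
noncomputable def Spq (n : ℕ) (α : ℝ) (k : ℤ) (lam : Fin n → ℝ) (p q : Fin n) : ℝ :=
  if p = q then 0 else esymmDel2 n (k - 2) lam p q + α * esymmDel2 n (k - 3) lam p q


namespace NewtonAux
open Polynomial Multiset

lemma esymm_zero' (s : Multiset ℝ) : s.esymm 0 = 1 := by
  simp [Multiset.esymm, Multiset.powersetCard_zero_left]

lemma esymm_cons (a : ℝ) (s : Multiset ℝ) (k : ℕ) :
    (a ::ₘ s).esymm (k+1) = s.esymm (k+1) + a * s.esymm k := by
  rw [Multiset.esymm, Multiset.powersetCard_cons, Multiset.map_add, Multiset.sum_add,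
    Multiset.map_map]
  congr 1
  rw [Multiset.esymm, ← Multiset.sum_map_mul_left]
  congr 1
  exact Multiset.map_congr rfl fun t _ => by simp [Multiset.prod_cons]

lemma esymm_of_lt (s : Multiset ℝ) {j : ℕ} (h : Multiset.card s < j) : s.esymm j = 0 := by
  simp [Multiset.esymm, Multiset.powersetCard_eq_empty _ h]

/-- top-three coefficient inequality: `2 e_c e_{c-2} ≤ e_{c-1}²` with `c = card s`. -/
lemma esymm_top3 (s : Multiset ℝ) (hs : 2 ≤ Multiset.card s) :
    2 * (s.esymm (Multiset.card s) * s.esymm (Multiset.card s - 2))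
      ≤ s.esymm (Multiset.card s - 1) ^ 2 := by
  induction s using Multiset.induction with
  | empty => simp at hs
  | cons a s ih =>
    rw [Multiset.card_cons] at hs ⊢
    rcases Nat.lt_or_ge (Multiset.card s) 2 with h | h
    · have h1 : Multiset.card s = 1 := by omega
      obtain ⟨b, rfl⟩ := Multiset.card_eq_one.mp h1
      have eb1 : ({b} : Multiset ℝ).esymm 1 = b := by
        rw [show ({b} : Multiset ℝ) = b ::ₘ 0 from rfl, show (1:ℕ) = 0+1 from rfl,
          esymm_cons, esymm_zero']
        simp [esymm_of_lt (0 : Multiset ℝ) (by simp : Multiset.card (0:Multiset ℝ) < 1)]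
      have eb2 : ({b} : Multiset ℝ).esymm 2 = 0 := esymm_of_lt _ (by simp)
      have e2 : (a ::ₘ {b}).esymm 2 = a * b := by
        rw [show (2:ℕ) = 1+1 from rfl, esymm_cons, eb1, eb2]; ring
      have e1 : (a ::ₘ {b}).esymm 1 = b + a := by
        rw [show (1:ℕ) = 0+1 from rfl, esymm_cons, esymm_zero', eb1]; ring
      rw [h1]
      norm_num [e2, e1, esymm_zero']
      nlinarith [sq_nonneg (a - b)]
    · obtain ⟨m, hm⟩ : ∃ m, Multiset.card s = m + 2 := ⟨Multiset.card s - 2, by omega⟩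
      have IH := ih h
      rw [hm] at IH ⊢
      have hz : s.esymm (m + 3) = 0 := esymm_of_lt s (by omega)
      rw [show m + 2 + 1 - 2 = m+1 from by omega]
      rw [show m + 2 - 1 = m + 1 from by omega, show m + 2 - 2 = m from by omega] at IH
      have g1 : (a ::ₘ s).esymm (m+2+1) = s.esymm (m+3) + a * s.esymm (m+2) := esymm_cons a s (m+2)
      have g2 : (a ::ₘ s).esymm (m+1) = s.esymm (m+1) + a * s.esymm m := esymm_cons a s m
      have g3 : (a ::ₘ s).esymm (m+2) = s.esymm (m+2) + a * s.esymm (m+1) := esymm_cons a s (m+1)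
      rw [show m + 2 + 1 - 1 = m + 2 from by omega, g1, g2, g3, hz]
      nlinarith [sq_nonneg a, sq_nonneg (s.esymm (m+2)),
        mul_le_mul_of_nonneg_left IH (sq_nonneg a)]

lemma splits_derivative (f : ℝ[X]) (hf : f.Splits) :
    (derivative f).Splits := by
  rcases eq_or_ne (derivative f) 0 with h | h
  · rw [h]; exact Splits.zero
  have hdeg : f.natDegree ≠ 0 := fun hh => h (derivative_of_natDegree_zero hh)
  rw [Polynomial.splits_iff_card_roots] at hf ⊢
  have h1 := Polynomial.card_roots_le_derivative f
  have h2 := Polynomial.card_roots' (derivative f)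
  have h3 := Polynomial.natDegree_derivative_le f
  omega

lemma splits_iterate_derivative (f : ℝ[X]) (hf : f.Splits) (d : ℕ) :
    (derivative^[d] f).Splits := by
  induction d with
  | zero => exact hf
  | succ d ih => rw [Function.iterate_succ_apply']; exact splits_derivative _ ih

/-- The bottom-three coefficient Newton inequality for split real polynomials. -/
lemma coeff_sq_ge (f : ℝ[X]) (hf : f.Splits) :
    2 * (f.coeff 0 * f.coeff 2) ≤ f.coeff 1 ^ 2 := by
  rcases Nat.lt_or_ge f.natDegree 2 with h2 | h2
  · rw [Polynomial.coeff_eq_zero_of_natDegree_lt h2]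
    simpa using sq_nonneg (f.coeff 1)
  have hcard : Multiset.card f.roots = f.natDegree := Polynomial.splits_iff_card_roots.mp hf
  have heq := Polynomial.Splits.eq_prod_roots hf
  have hco : ∀ m, m ≤ Multiset.card f.roots → f.coeff m =
      f.leadingCoeff * ((-1)^(Multiset.card f.roots - m)
        * f.roots.esymm (Multiset.card f.roots - m)) := by
    intro m hm
    conv_lhs => rw [heq]
    rw [Polynomial.coeff_C_mul, Multiset.prod_X_sub_C_coeff _ hm]
  set D := Multiset.card f.roots with hD
  set c := f.leadingCoeff
  rw [hco 0 (by omega), hco 1 (by omega), hco 2 (by omega)]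
  simp only [Nat.sub_zero]
  have hN := esymm_top3 f.roots (by omega)
  set A := f.roots.esymm D
  set B := f.roots.esymm (D - 2)
  set E := f.roots.esymm (D - 1)
  have hp1 : ((-1:ℝ)^D) * ((-1:ℝ)^(D-2)) = 1 := by
    rw [← pow_add]
    exact Even.neg_one_pow ⟨D - 1, by omega⟩
  have hp2 : ((-1:ℝ)^(D-1)) * ((-1:ℝ)^(D-1)) = 1 := by
    rw [← pow_add]
    exact Even.neg_one_pow ⟨D - 1, by omega⟩
  have lhs_eq : 2 * ((c * ((-1)^D * A)) * (c * ((-1)^(D-2) * B)))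
      = c^2 * (((-1:ℝ)^D) * ((-1:ℝ)^(D-2))) * (2 * (A * B)) := by ring
  have rhs_eq : (c * ((-1)^(D-1) * E))^2
      = c^2 * (((-1:ℝ)^(D-1)) * ((-1:ℝ)^(D-1))) * E^2 := by ring
  rw [lhs_eq, rhs_eq, hp1, hp2, mul_one]
  exact mul_le_mul_of_nonneg_left hN (sq_nonneg c)

lemma descFact_id (d : ℕ) :
    (d+2) * ((d+1).descFactorial d)^2
      = 2 * (d+1) * (d.descFactorial d * (d+2).descFactorial d) := by
  induction d with
  | zero => rfl
  | succ d ih =>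
    rw [show d+1+1 = d+2 from rfl, Nat.succ_descFactorial_succ (d+1) d,
      Nat.succ_descFactorial_succ d d, Nat.succ_descFactorial_succ (d+2) d]
    rw [show (d+2+1) * ((d+2) * Nat.descFactorial (d+1) d)^2
        = ((d+2+1)*(d+2)) * ((d+2) * ((d+1).descFactorial d)^2) from by ring, ih]
    ring

lemma splits_prod_X_add_C (u : Multiset ℝ) :
    ((u.map fun r => X + C r).prod).Splits := by
  induction u using Multiset.induction with
  | empty => simpa using Splits.one
  | cons a t iht =>
      rw [Multiset.map_cons, Multiset.prod_cons]
      exact Splits.mul (Splits.of_natDegree_le_one (by simp [natDegree_X_add_C])) iht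

/-- Newton's inequality (unnormalized) for arbitrary real multisets. -/
lemma esymm_newton (u : Multiset ℝ) (j : ℕ) (hj : 1 ≤ j) :
    u.esymm (j+1) * u.esymm (j-1) ≤ u.esymm j ^ 2 := by
  rcases Nat.lt_or_ge (Multiset.card u) (j+1) with hc | hc
  · rw [esymm_of_lt u hc]
    simpa using sq_nonneg (u.esymm j)
  obtain ⟨d, hd⟩ : ∃ d, Multiset.card u = j + 1 + d := ⟨Multiset.card u - (j+1), by omega⟩
  have hsp := splits_iterate_derivative _ (splits_prod_X_add_C u) d
  have key := coeff_sq_ge _ hsp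
  have hco : ∀ m, m ≤ 2 → (derivative^[d] (u.map fun r => X + C r).prod).coeff m
      = ((m+d).descFactorial d : ℝ) * u.esymm (j + 1 - m) := by
    intro m hm
    rw [Polynomial.coeff_iterate_derivative, Multiset.prod_X_add_C_coeff u (by omega : m + d ≤ Multiset.card u)]
    rw [show Multiset.card u - (m + d) = j + 1 - m from by omega]
    simp [nsmul_eq_mul]
  rw [hco 0 (by omega), hco 1 (by omega), hco 2 (by omega)] at key
  have hq : j + 1 - 0 = j + 1 := rfl
  have hq1 : j + 1 - 1 = j := by omega
  have hq2 : j + 1 - 2 = j - 1 := by omega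
  rw [hq, hq1, hq2, show 0+d = d from by omega, show 1+d = d+1 from by omega,
    show 2+d = d+2 from by omega] at key
  -- key : 2 * ((c0 * e_{j+1}) * (c2 * e_{j-1})) ≤ (c1 * e_j)^2
  rcases le_or_gt (u.esymm (j+1) * u.esymm (j-1)) 0 with h0 | h0
  · exact h0.trans (sq_nonneg _)
  have hid := descFact_id d
  set c0 : ℕ := d.descFactorial d
  set c1 : ℕ := (d+1).descFactorial d
  set c2 : ℕ := (d+2).descFactorial d
  have hc1 : 0 < c1 := Nat.pos_of_ne_zero fun hh =>
    (by omega : ¬ (d + 1 < d)) (Nat.descFactorial_eq_zero_iff_lt.mp hh)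
  have hcast : ((d:ℝ)+2) * (c1:ℝ)^2 = 2*((d:ℝ)+1)*((c0:ℝ)*(c2:ℝ)) := by
    exact_mod_cast hid
  have hnn : (0:ℝ) ≤ (c0:ℝ)*(c2:ℝ) := by positivity
  have h1 : (c1:ℝ)^2 ≤ 2*((c0:ℝ)*(c2:ℝ)) := by nlinarith
  have hc1R : (0:ℝ) < (c1:ℝ)^2 := by positivity
  have h2 : (c1:ℝ)^2 * (u.esymm (j+1) * u.esymm (j-1))
      ≤ (c1:ℝ)^2 * u.esymm j ^ 2 := by
    nlinarith [key, mul_le_mul_of_nonneg_right h1 h0.le]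
  exact le_of_mul_le_mul_left h2 hc1R


lemma esymm_one' (s : Multiset ℝ) : s.esymm 1 = s.sum := by
  simp [Multiset.esymm, Multiset.powersetCard_one, Multiset.map_map, Function.comp]

/-- Garding cone condition for multisets. -/
def Gm (m : ℕ) (s : Multiset ℝ) : Prop := ∀ j : ℕ, 1 ≤ j → j ≤ m → 0 < s.esymm j

lemma esymm_nonneg (s : Multiset ℝ) (h : ∀ x ∈ s, 0 ≤ x) : ∀ j, 0 ≤ s.esymm j := by
  induction s using Multiset.induction with
  | empty =>
      intro j
      rcases j with _ | j
      · rw [esymm_zero']; norm_num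
      · rw [esymm_of_lt _ (by simp)]
  | cons a t ih =>
      intro j
      rcases j with _ | j
      · rw [esymm_zero']; norm_num
      · rw [esymm_cons]
        have ha : 0 ≤ a := h a (mem_cons_self a t)
        have ht : ∀ x ∈ t, 0 ≤ x := fun x hx => h x (mem_cons_of_mem hx)
        have h1 := ih ht (j+1)
        have h2 := mul_nonneg ha (ih ht j)
        linarith

lemma esymm_pos (s : Multiset ℝ) (h : ∀ x ∈ s, 0 < x) :
    ∀ j, j ≤ Multiset.card s → 0 < s.esymm j := by
  induction s using Multiset.induction with
  | empty =>
      intro j hj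
      have : j = 0 := by simpa using hj
      rw [this, esymm_zero']; norm_num
  | cons a t ih =>
      intro j hj
      rcases j with _ | j
      · rw [esymm_zero']; norm_num
      · rw [esymm_cons]
        have ha : 0 < a := h a (mem_cons_self a t)
        have ht : ∀ x ∈ t, 0 < x := fun x hx => h x (mem_cons_of_mem hx)
        have h1 : 0 < t.esymm j := ih ht j (by simp at hj; omega)
        have h2 : 0 ≤ t.esymm (j+1) := esymm_nonneg t (fun x hx => (ht x hx).le) _
        nlinarith

/-- Deleting a nonpositive entry preserves positivity of `σ_j` up to the dimension. -/
lemma Gm_cons_nonpos {a : ℝ} (ha : a ≤ 0) (u : Multiset ℝ) (m : ℕ)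
    (hG : Gm m (a ::ₘ u)) :
    ∀ j, 1 ≤ j → j ≤ m → j ≤ Multiset.card u → 0 < u.esymm j := by
  intro j
  induction j with
  | zero => omega
  | succ j ih =>
      intro _ hjm hjc
      have h1 : 0 < (a ::ₘ u).esymm (j+1) := hG (j+1) (by omega) hjm
      rw [esymm_cons] at h1
      have h2 : 0 ≤ u.esymm j := by
        rcases Nat.eq_zero_or_pos j with h | h
        · rw [h, esymm_zero']; norm_num
        · exact (ih h (by omega) (by omega)).le
      nlinarith

/-- If `λ ∈ Γ_N` in dimension `N`, all entries are positive. -/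
lemma pos_of_Gm_card (s : Multiset ℝ) (hG : Gm (Multiset.card s) s) :
    ∀ a ∈ s, 0 < a := by
  intro a ha
  by_contra hle
  push_neg at hle
  have hs : s = a ::ₘ s.erase a := (cons_erase ha).symm
  set u := s.erase a with hu
  have hcard : Multiset.card s = Multiset.card u + 1 := by
    rw [hs, card_cons]
  have hGu := Gm_cons_nonpos hle u (Multiset.card s) (by rwa [← hs])
  have h1 : 0 < s.esymm (Multiset.card u + 1) := hG _ (by omega) (by omega)
  rw [hs, esymm_cons] at h1
  have h2 : u.esymm (Multiset.card u + 1) = 0 := esymm_of_lt u (by omega)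
  have h3 : 0 < u.esymm (Multiset.card u) := by
    rcases Nat.eq_zero_or_pos (Multiset.card u) with h | h
    · rw [h, esymm_zero']; norm_num
    · exact hGu _ h (by omega) le_rfl
  nlinarith

/-- Key lemma: deleting the largest entry drops the cone index by one. -/
lemma Gm_erase_max : ∀ (n : ℕ) (t : Multiset ℝ) (_ : Multiset.card t = n) (b : ℝ)
    (_ : ∀ x ∈ (b ::ₘ t), x ≤ b) (m : ℕ) (_ : m ≤ Multiset.card (b ::ₘ t))
    (_ : Gm m (b ::ₘ t)), Gm (m-1) t := by
  intro n
  induction n using Nat.strong_induction_on with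
  | _ n IH =>
    intro t hn b hmax m hm hG
    intro j hj1 hj2
    -- so 2 ≤ m
    have hm2 : 2 ≤ m := by omega
    by_cases hall : ∀ x ∈ (b ::ₘ t), 0 < x
    · exact esymm_pos t (fun x hx => hall x (mem_cons_of_mem hx)) j
        (by rw [card_cons] at hm; omega)
    · push_neg at hall
      obtain ⟨a, hamem, ha⟩ := hall
      have hbpos : 0 < b := by
        have h1 : 0 < (b ::ₘ t).esymm 1 := hG 1 le_rfl (by omega)
        rw [esymm_one'] at h1
        by_contra hb
        push_neg at hb
        have : (b ::ₘ t).sum ≤ 0 := by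
          have : ∀ x ∈ (b ::ₘ t), x ≤ (0:ℝ) := fun x hx => (hmax x hx).trans hb
          calc (b ::ₘ t).sum ≤ Multiset.card (b ::ₘ t) • (0:ℝ) :=
                Multiset.sum_le_card_nsmul _ _ this
            _ = 0 := by simp
        linarith
      have hat : a ∈ t := by
        rcases mem_cons.mp hamem with h | h
        · exfalso; rw [h] at ha; linarith
        · exact h
      set u := t.erase a with hu
      have ht : t = a ::ₘ u := (cons_erase hat).symm
      have hsw : b ::ₘ t = a ::ₘ (b ::ₘ u) := by rw [ht, Multiset.cons_swap]
      set w : Multiset ℝ := b ::ₘ u with hw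
      -- card bookkeeping
      have hcu : Multiset.card t = Multiset.card u + 1 := by rw [ht, card_cons]
      rw [card_cons] at hm
      -- s cannot have card = m since it has a nonpositive entry
      have hcs : m < Multiset.card t + 1 := by
        rcases Nat.lt_or_ge m (Multiset.card t + 1) with h | h
        · exact h
        · exfalso
          have : Multiset.card (b ::ₘ t) = m := by rw [card_cons]; omega
          have := pos_of_Gm_card (b ::ₘ t) (by rwa [this]) a hamem
          linarith
      -- w ∈ Γ_m
      have hGw : Gm m w := by
        intro i hi1 hi2
        exact Gm_cons_nonpos ha w m (by rwa [hsw] at hG) i hi1 hi2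
          (by rw [hw, card_cons]; omega)
      -- u ∈ Γ_{m-1} by induction (w = b ::ₘ u, b maximal)
      have hGu : Gm (m-1) u := by
        refine IH (Multiset.card u) (by omega) u rfl b ?_ m (by rw [card_cons]; omega) hGw
        intro x hx
        rcases mem_cons.mp hx with h | h
        · rw [h]
        · exact hmax x (mem_cons_of_mem (by rw [ht]; exact mem_cons_of_mem h))
      -- now the main computation
      have hjc : j ≤ Multiset.card u := by omega
      have hNew := esymm_newton u j hj1
      have h1 : 0 < (b ::ₘ t).esymm (j+1) := hG (j+1) (by omega) (by omega)
      rw [hsw, esymm_cons] at h1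
      have hEw1 : w.esymm (j+1) = u.esymm (j+1) + b * u.esymm j := esymm_cons b u j
      have hEw0 : w.esymm j = u.esymm j + b * u.esymm (j-1) := by
        obtain ⟨i, rfl⟩ : ∃ i, j = i + 1 := ⟨j - 1, by omega⟩
        rw [esymm_cons]
        norm_num
      have h3 : 0 < u.esymm j := hGu j hj1 hj2
      have h4 : 0 < u.esymm (j-1) := by
        rcases Nat.eq_zero_or_pos (j-1) with h | h
        · rw [h, esymm_zero']; norm_num
        · exact hGu _ h (by omega)
      have h2 : 0 < w.esymm j := hGw j hj1 (by omega)
      have hEt : t.esymm j = u.esymm j + a * u.esymm (j-1) := by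
        obtain ⟨i, rfl⟩ : ∃ i, j = i + 1 := ⟨j - 1, by omega⟩
        rw [ht, esymm_cons]
        norm_num
      rw [ht] at hEt
      rw [← ht] at *
      rw [hEt]
      rw [hEw1, hEw0] at h1
      rw [hEw0] at h2
      nlinarith [mul_pos h1 h4, hNew, h2, h3, h4, hbpos, mul_pos h2 h4]

end NewtonAux

open NewtonAux Multiset in
theorem lam_bounds_of_Sk_le
    (n : ℕ) (hn : 2 ≤ n) (k : ℕ) (hk1 : 2 ≤ k) (hk : k ≤ n)
    (α : ℝ) (hα : 0 < α) (N₀ : ℝ) (hN₀ : 0 < N₀)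
    (lam : Fin n → ℝ) (hlam : lam ∈ Gamma n k) (hsort : Antitone lam)
    (hSk : SZ n α k lam ≤ N₀) :
    lam ⟨k - 2, by omega⟩ ≤ (N₀ / α) ^ ((1 : ℝ) / ((k : ℝ) - 1)) ∧
    lam ⟨n - 1, by omega⟩ >
      -(((n : ℝ) - (k : ℝ)) * (N₀ / α) ^ ((1 : ℝ) / ((k : ℝ) - 1))) := by
  -- the multiset of the entries with index ≥ j
  set T : ℕ → Multiset ℝ :=
    fun j => ((Finset.univ.filter (fun i : Fin n => j ≤ (i : ℕ))).val).map lam with hT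
  have hT0 : T 0 = Finset.univ.val.map lam := by
    show Multiset.map lam (Finset.univ.filter (fun i : Fin n => 0 ≤ (i : ℕ))).val
        = Finset.univ.val.map lam
    rw [show (Finset.univ.filter (fun i : Fin n => 0 ≤ (i : ℕ))) = Finset.univ from by ext i; simp]
  have hEZ : ∀ j : ℕ, esymmZ n (j : ℤ) lam = (T 0).esymm j := by
    intro j
    rw [esymmZ, if_neg (by exact_mod_cast Int.not_lt.mpr (Int.natCast_nonneg j))]
    rw [hT0, Finset.esymm_map_val]
    simp
  have hcons : ∀ j, (hj : j < n) → T j = lam ⟨j, hj⟩ ::ₘ T (j+1) := by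
    intro j hj
    have hins : (Finset.univ.filter (fun i : Fin n => j ≤ (i : ℕ)))
        = insert ⟨j, hj⟩ (Finset.univ.filter (fun i : Fin n => j+1 ≤ (i : ℕ))) := by
      ext i
      simp only [Finset.mem_filter, Finset.mem_univ, true_and, Finset.mem_insert]
      constructor
      · intro h
        rcases Nat.eq_or_lt_of_le h with h' | h'
        · left; exact Fin.ext h'.symm
        · right; omega
      · rintro (rfl | h)
        · simp
        · omega
    rw [hT]
    simp only
    rw [hins, Finset.insert_val_of_notMem (by simp), Multiset.map_cons]
  have hmax : ∀ j (hj : j < n), ∀ x ∈ T j, x ≤ lam ⟨j, hj⟩ := by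
    intro j hj x hx
    rw [hT] at hx
    simp only [Multiset.mem_map, Finset.mem_val, Finset.mem_filter] at hx
    obtain ⟨i, ⟨_, hji⟩, rfl⟩ := hx
    exact hsort (by simpa [Fin.le_def] using hji)
  have hcard : ∀ j, j ≤ n → Multiset.card (T j) = n - j := by
    intro j
    induction j with
    | zero =>
        intro _
        rw [hT0]
        simp
    | succ j ih =>
        intro hj
        have h1 := ih (by omega)
        rw [hcons j (by omega), Multiset.card_cons] at h1
        omega
  -- Γ_k membership for T 0, then iterate deletion of the max
  have hGam : ∀ j, j ≤ k - 1 → Gm (k - j) (T j) := by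
    intro j
    induction j with
    | zero =>
        intro _
        intro i hi1 hi2
        rw [← hEZ i]
        exact hlam i hi1 (by omega)
    | succ j ih =>
        intro hj
        have hGj := ih (by omega)
        have hjn : j < n := by omega
        have h := Gm_erase_max (Multiset.card (T (j+1))) (T (j+1)) rfl (lam ⟨j, hjn⟩)
          (by rw [← hcons j hjn]; exact hmax j hjn) (k - j)
          (by rw [← hcons j hjn, hcard j (by omega)]; omega)
          (by rw [← hcons j hjn]; exact hGj)
        have : k - j - 1 = k - (j+1) := by omega
        rwa [this] at h
  set M : ℝ := (N₀ / α) ^ ((1 : ℝ) / ((k : ℝ) - 1)) with hM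
  have hMpos : 0 < M := Real.rpow_pos_of_pos (div_pos hN₀ hα) _
  set x : ℝ := lam ⟨k-2, by omega⟩ with hx
  -- x > 0
  have hxpos : 0 < x := by
    have hG2 : Gm (k - (k-2)) (T (k-2)) := hGam (k-2) (by omega)
    have h1 : 0 < (T (k-2)).esymm 1 := hG2 1 le_rfl (by omega)
    rw [esymm_one'] at h1
    by_contra hxn
    push_neg at hxn
    have hle : ∀ y ∈ T (k-2), y ≤ (0:ℝ) := fun y hy => (hmax (k-2) (by omega) y hy).trans hxn
    have : (T (k-2)).sum ≤ 0 := by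
      calc (T (k-2)).sum ≤ Multiset.card (T (k-2)) • (0:ℝ) := Multiset.sum_le_card_nsmul _ _ hle
        _ = 0 := by simp
    linarith
  -- σ_{k-1}(λ) ≤ N₀/α
  have hSig : (T 0).esymm (k-1) ≤ N₀ / α := by
    have hEk : 0 < (T 0).esymm k := by
      have := hGam 0 (by omega) k (by omega) (by omega)
      simpa using this
    have hcast : ((k : ℤ) - 1) = ((k-1 : ℕ) : ℤ) := by omega
    rw [SZ, hcast, hEZ, hEZ] at hSk
    rw [le_div_iff₀ hα]
    nlinarith
  -- chain: x^(k-1) ≤ σ_{k-1}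
  have hchain : ∀ j, j ≤ k - 1 → x ^ j ≤ (T (k-1-j)).esymm j := by
    intro j
    induction j with
    | zero => intro _; rw [esymm_zero', pow_zero]
    | succ j ih =>
        intro hj
        have hih := ih (by omega)
        have hi : k-1-(j+1) < n := by omega
        have hstep : T (k-1-(j+1)) = lam ⟨k-1-(j+1), hi⟩ ::ₘ T (k-1-j) := by
          have := hcons (k-1-(j+1)) hi
          rwa [show k-1-(j+1)+1 = k-1-j from by omega] at this
        rw [hstep, esymm_cons]
        have hnn : 0 ≤ (T (k-1-j)).esymm (j+1) := by
          rcases Nat.eq_or_lt_of_le hj with h | h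
        -- j+1 = k-1-... two cases: esymm positive from hGam
          all_goals {
            have hG := hGam (k-1-(j+1)+1) (by omega)
            rw [show k-1-(j+1)+1 = k-1-j from by omega] at hG
            have := hG (j+1) (by omega) (by omega)
            linarith }
        have hxle : x ≤ lam ⟨k-1-(j+1), hi⟩ := by
          rw [hx]
          exact hsort (by simp [Fin.le_def]; omega)
        have hxj : 0 ≤ x ^ j := le_of_lt (pow_pos hxpos j)
        calc x ^ (j+1) = x * x ^ j := by ring
          _ ≤ lam ⟨k-1-(j+1), hi⟩ * (T (k-1-j)).esymm j := by
              apply mul_le_mul hxle hih hxj (le_trans hxpos.le hxle)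
          _ ≤ (T (k-1-j)).esymm (j+1) + lam ⟨k-1-(j+1), hi⟩ * (T (k-1-j)).esymm j := by
              linarith
  have hxk : x ^ (k-1) ≤ N₀ / α := by
    have := hchain (k-1) le_rfl
    rw [show k-1-(k-1) = 0 from by omega] at this
    linarith
  -- conclude x ≤ M
  have hkR : (2:ℝ) ≤ (k:ℝ) := by exact_mod_cast hk1
  have hne : (k:ℝ) - 1 ≠ 0 := by linarith
  have hMk' : M ^ (k-1 : ℕ) = N₀ / α := by
    rw [← Real.rpow_natCast M (k-1), show (((k-1:ℕ)):ℝ) = (k:ℝ)-1 from by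
      push_cast [Nat.cast_sub (by omega : 1 ≤ k)]; ring]
    rw [hM, ← Real.rpow_mul (div_pos hN₀ hα).le, one_div, inv_mul_cancel₀ hne, Real.rpow_one]
  have hxM : x ≤ M := by
    by_contra hcon
    push_neg at hcon
    have h2 : M ^ (k-1:ℕ) < x ^ (k-1:ℕ) := by
      apply pow_lt_pow_left₀ hcon hMpos.le
      omega
    rw [hMk'] at h2
    linarith
  refine ⟨hxM, ?_⟩
  -- second part
  have hG1 : Gm (k-(k-1)) (T (k-1)) := hGam (k-1) le_rfl
  have hsum : 0 < (T (k-1)).sum := by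
    have := hG1 1 le_rfl (by omega)
    rwa [esymm_one'] at this
  set A : Finset (Fin n) := Finset.univ.filter (fun i : Fin n => k-1 ≤ (i : ℕ)) with hA
  have hsumA : (T (k-1)).sum = ∑ i ∈ A, lam i := rfl
  have hlastmem : ((⟨n-1, by omega⟩ : Fin n) : ℕ) = n - 1 := rfl
  set B : Finset (Fin n) :=
    Finset.univ.filter (fun i : Fin n => k-1 ≤ (i : ℕ) ∧ (i : ℕ) < n-1) with hB
  have hAB : A = insert ⟨n-1, by omega⟩ B := by
    ext i
    have hi := i.isLt
    simp only [hA, hB, Finset.mem_filter, Finset.mem_univ, true_and, Finset.mem_insert,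
      Fin.ext_iff]
    constructor
    · intro h
      rcases Nat.lt_or_ge (i : ℕ) (n-1) with h' | h'
      · right; exact ⟨h, h'⟩
      · left; omega
    · rintro (h | ⟨h, _⟩)
      · omega
      · exact h
  have hnotmem : (⟨n-1, by omega⟩ : Fin n) ∉ B := by
    simp [hB]
  have hsplit : ∑ i ∈ A, lam i = lam ⟨n-1, by omega⟩ + ∑ i ∈ B, lam i := by
    rw [hAB, Finset.sum_insert hnotmem]
  have hcardA : A.card = n - (k-1) := by
    have h1 := hcard (k-1) (by omega)
    have h2 : Multiset.card (T (k-1)) = A.card := by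
      show Multiset.card (Multiset.map lam A.val) = A.card
      rw [Multiset.card_map]
      rfl
    omega
  have hcardB : B.card = n - k := by
    have := hcardA
    rw [hAB, Finset.card_insert_of_notMem hnotmem] at this
    omega
  have hBle : ∀ i ∈ B, lam i ≤ M := by
    intro i hi
    simp only [hB, Finset.mem_filter] at hi
    have h1 : x = lam ⟨k-2, by omega⟩ := hx
    have : lam i ≤ lam ⟨k-2, by omega⟩ := hsort (by simp [Fin.le_def]; omega)
    linarith
  have hsumB : ∑ i ∈ B, lam i ≤ (B.card : ℝ) * M := by
    have := Finset.sum_le_card_nsmul B lam M hBle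
    simpa [nsmul_eq_mul] using this
  have hcast2 : ((n - k : ℕ) : ℝ) = (n:ℝ) - (k:ℝ) := by
    push_cast [Nat.cast_sub hk]
    ring
  rw [hsumA, hsplit] at hsum
  rw [hcardB, hcast2] at hsumB
  have : -(((n:ℝ) - (k:ℝ)) * M) < lam ⟨n-1, by omega⟩ := by linarith
  exact this
end

section
/- Let n ≥ 2, let 2 ≤ k ≤ n, α > 0 and N₀ > 0. For every ε₀ ∈ (0, 1) there exists a constant Λ > 0, depending only on n, k, α, N₀ and ε₀, with the following property: whenever λ = (λ₁,…,λ_n) ∈ Γ_k satisfies λ₁ ≥ λ₂ ≥ ⋯ ≥ λ_n, S_k(λ) ≤ N₀ and λ₁ ≥ Λ, then S_k(λ) > (1 − ε₀) λ₁ S_k^{11}(λ). -/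
open scoped BigOperators

namespace SkAux

open Multiset

lemma esymm_cons (a : ℝ) (s : Multiset ℝ) (j : ℕ) :
    (a ::ₘ s).esymm (j + 1) = a * s.esymm j + s.esymm (j + 1) := by
  rw [Multiset.esymm, Multiset.powersetCard_cons, Multiset.map_add, Multiset.sum_add,
    Multiset.map_map]
  have h : ((Multiset.powersetCard j s).map (Multiset.prod ∘ Multiset.cons a)).sum
      = a * s.esymm j := by
    rw [Multiset.esymm, ← Multiset.sum_map_mul_left]
    congr 1
    apply Multiset.map_congr rfl
    intro t _
    simp [Multiset.prod_cons]
  rw [h, Multiset.esymm, Multiset.esymm]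
  ring

lemma esymm_zero' (s : Multiset ℝ) : s.esymm 0 = 1 := by
  simp [Multiset.esymm, Multiset.powersetCard_zero_left]

lemma esymm_one' (s : Multiset ℝ) : s.esymm 1 = s.sum := by
  rw [Multiset.esymm, Multiset.powersetCard_one, Multiset.map_map]
  simp

lemma esymm_of_card_lt {s : Multiset ℝ} {j : ℕ} (h : Multiset.card s < j) : s.esymm j = 0 := by
  rw [Multiset.esymm, Multiset.powersetCard_eq_empty _ h]
  rfl

lemma esymm_card (s : Multiset ℝ) : s.esymm (Multiset.card s) = s.prod := by
  induction s using Multiset.induction with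
  | empty => simp [esymm_zero']
  | cons a s ih =>
    rw [Multiset.card_cons, esymm_cons, ih, esymm_of_card_lt (Nat.lt_succ_self _),
      Multiset.prod_cons]
    ring

lemma esymm_pred (s : Multiset ℝ) (h0 : ∀ z ∈ s, z ≠ 0) {d : ℕ}
    (hd : Multiset.card s = d + 1) :
    s.esymm d = s.prod * (s.map (·⁻¹)).sum := by
  induction s using Multiset.induction generalizing d with
  | empty => simp at hd
  | cons a s ih =>
    have ha : a ≠ 0 := h0 a (mem_cons_self a s)
    have hcs : Multiset.card s = d := by
      have := hd; rw [Multiset.card_cons] at this; omega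
    rcases Nat.eq_zero_or_pos d with hd0 | hdpos
    · subst hd0
      have hs0 : s = 0 := Multiset.card_eq_zero.mp hcs
      subst hs0
      simp [esymm_zero', ha]
    · obtain ⟨e, rfl⟩ : ∃ e, d = e + 1 := ⟨d - 1, by omega⟩
      have hIH : s.esymm e = s.prod * (s.map (·⁻¹)).sum :=
        ih (fun z hz => h0 z (mem_cons_of_mem hz)) hcs
      have htop : s.esymm (e + 1) = s.prod := by
        rw [← hcs, esymm_card]
      rw [esymm_cons, hIH, htop, Multiset.prod_cons, Multiset.map_cons, Multiset.sum_cons]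
      field_simp
      ring

lemma esymm_pred2 (s : Multiset ℝ) (h0 : ∀ z ∈ s, z ≠ 0) {d : ℕ}
    (hd : Multiset.card s = d + 2) :
    s.esymm d = s.prod * (s.map (·⁻¹)).esymm 2 := by
  induction s using Multiset.induction generalizing d with
  | empty => simp at hd
  | cons a s ih =>
    have ha : a ≠ 0 := h0 a (mem_cons_self a s)
    have h0s : ∀ z ∈ s, z ≠ 0 := fun z hz => h0 z (mem_cons_of_mem hz)
    have hcs : Multiset.card s = d + 1 := by
      have := hd; rw [Multiset.card_cons] at this; omega
    have hprodne : s.prod ≠ 0 := Multiset.prod_ne_zero (fun h => h0s 0 h rfl)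
    rcases Nat.eq_zero_or_pos d with hd0 | hdpos
    · subst hd0
      -- card s = 1
      obtain ⟨b, rfl⟩ : ∃ b, s = {b} := Multiset.card_eq_one.mp hcs
      have hb : b ≠ 0 := h0s b (Multiset.mem_singleton_self b)
      rw [esymm_zero']
      have : ((a ::ₘ ({b} : Multiset ℝ)).map (·⁻¹)).esymm 2
          = ((a ::ₘ ({b} : Multiset ℝ)).map (·⁻¹)).prod := by
        have hc : Multiset.card ((a ::ₘ ({b} : Multiset ℝ)).map (·⁻¹)) = 2 := by simp
        rw [← hc, esymm_card]
      rw [this]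
      simp [Multiset.prod_cons, Multiset.prod_singleton]
      field_simp
    · obtain ⟨e, rfl⟩ : ∃ e, d = e + 1 := ⟨d - 1, by omega⟩
      have hIH : s.esymm e = s.prod * (s.map (·⁻¹)).esymm 2 := ih h0s (by omega)
      have hpred : s.esymm (e + 1) = s.prod * (s.map (·⁻¹)).sum := esymm_pred s h0s hcs
      rw [esymm_cons, hIH, hpred, Multiset.prod_cons, Multiset.map_cons]
      rw [show (2:ℕ) = 1 + 1 from rfl, esymm_cons, esymm_one']
      field_simp
      ring

lemma sq_sum_eq (s : Multiset ℝ) :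
    s.sum ^ 2 = (s.map (fun z => z ^ 2)).sum + 2 * s.esymm 2 := by
  induction s using Multiset.induction with
  | empty => simp [esymm_of_card_lt (show Multiset.card (0 : Multiset ℝ) < 2 by simp)]
  | cons a s ih =>
    rw [Multiset.sum_cons, Multiset.map_cons, Multiset.sum_cons,
      show (2:ℕ) = 1 + 1 from rfl, esymm_cons, esymm_one']
    rw [show (1+1 : ℕ) = 2 from rfl] at *
    nlinarith [ih]

lemma cs_multiset (s : Multiset ℝ) :
    s.sum ^ 2 ≤ (Multiset.card s : ℝ) * (s.map (fun z => z ^ 2)).sum := by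
  induction s using Multiset.induction with
  | empty => simp
  | cons a s ih =>
    rcases eq_or_ne s 0 with rfl | hs
    · simp
    · have hc1 : (1 : ℝ) ≤ (Multiset.card s : ℝ) := by
        have := Multiset.card_pos.mpr hs
        exact_mod_cast this
      have hQ : (0:ℝ) ≤ (s.map (fun z => z ^ 2)).sum := by
        apply Multiset.sum_nonneg
        intro x hx
        obtain ⟨z, _, rfl⟩ := Multiset.mem_map.mp hx
        positivity
      rw [Multiset.sum_cons, Multiset.map_cons, Multiset.sum_cons, Multiset.card_cons]
      push_cast
      nlinarith [ih, sq_nonneg ((Multiset.card s : ℝ) * a - s.sum), sq_nonneg (a - s.sum), hc1, hQ]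

lemma newton_edge (r : Multiset ℝ) (h0 : ∀ z ∈ r, z ≠ 0) {d : ℕ} (hd1 : 1 ≤ d)
    (hd : Multiset.card r = d + 1) :
    2 * ((d:ℝ) + 1) * (r.esymm (d + 1) * r.esymm (d - 1)) ≤ (d:ℝ) * (r.esymm d) ^ 2 := by
  set w : Multiset ℝ := r.map (·⁻¹) with hw
  have htop : r.esymm (d + 1) = r.prod := by rw [← hd, esymm_card]
  have h1 : r.esymm d = r.prod * w.sum := esymm_pred r h0 hd
  have h2 : r.esymm (d - 1) = r.prod * w.esymm 2 := by
    apply esymm_pred2 r h0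
    omega
  have hcw : (Multiset.card w : ℝ) = (d : ℝ) + 1 := by
    rw [hw, Multiset.card_map, hd]; push_cast; ring
  have hcs : w.sum ^ 2 ≤ ((d:ℝ) + 1) * (w.map (fun z => z ^ 2)).sum := by
    have := cs_multiset w
    rwa [hcw] at this
  have hsq : w.sum ^ 2 = (w.map (fun z => z ^ 2)).sum + 2 * w.esymm 2 := sq_sum_eq w
  have key : 2 * ((d:ℝ) + 1) * w.esymm 2 ≤ (d:ℝ) * w.sum ^ 2 := by nlinarith [hcs, hsq]
  rw [htop, h1, h2]
  have := mul_le_mul_of_nonneg_left key (sq_nonneg r.prod)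
  nlinarith [this]


open Multiset Polynomial


lemma descFactorial_succ_self (c : ℕ) : (c+1).descFactorial c = (c+1).factorial := by
  induction c with
  | zero => rfl
  | succ c ih =>
    rw [Nat.succ_descFactorial_succ, ih, Nat.factorial_succ (c+1)]

lemma two_mul_descFactorial (c : ℕ) : 2 * ((c+2).descFactorial c) = (c+2).factorial := by
  induction c with
  | zero => rfl
  | succ c ih =>
    rw [show c+1+2 = (c+2)+1 from by omega, Nat.succ_descFactorial_succ,
      Nat.factorial_succ, ← ih]
    ring

lemma card_roots_iterate (p : ℝ[X]) (c : ℕ) :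
    Multiset.card p.roots - c ≤ Multiset.card ((derivative^[c]) p).roots := by
  induction c with
  | zero => simp
  | succ c ih =>
    have h := Polynomial.card_roots_le_derivative ((derivative^[c]) p)
    rw [Function.iterate_succ_apply']
    omega

lemma newton_finset {ι : Type*} [DecidableEq ι] (s : Finset ι) (x : ι → ℝ) (m c : ℕ)
    (hm : 1 ≤ m) (hcard : s.card = m + 1 + c) :
    ((m:ℝ)+1) * ((c:ℝ)+2) * ((∑ t ∈ s.powersetCard (m-1), ∏ i ∈ t, x i) *
      (∑ t ∈ s.powersetCard (m+1), ∏ i ∈ t, x i)) ≤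
    (m:ℝ) * ((c:ℝ)+1) * (∑ t ∈ s.powersetCard m, ∏ i ∈ t, x i) ^ 2 := by
  set E0 : ℝ := ∑ t ∈ s.powersetCard (m+1), ∏ i ∈ t, x i with hE0def
  set E1 : ℝ := ∑ t ∈ s.powersetCard m, ∏ i ∈ t, x i with hE1def
  set E2 : ℝ := ∑ t ∈ s.powersetCard (m-1), ∏ i ∈ t, x i with hE2def
  by_cases hE0z : E0 = 0
  · rw [hE0z]
    have h1 : ((m:ℝ)+1) * ((c:ℝ)+2) * (E2 * 0) = 0 := by ring
    rw [h1]
    positivity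
  set f : ℝ[X] := ∏ i ∈ s, (X + C (x i)) with hfdef
  have hfm : f.Monic := monic_prod_of_monic _ _ fun i _ => monic_X_add_C (x i)
  have hfdeg : f.natDegree = s.card := by
    rw [hfdef, natDegree_prod_of_monic _ _ fun i _ => monic_X_add_C (x i)]
    simp [natDegree_X_add_C]
  have hfne : f ≠ 0 := hfm.ne_zero
  have hrootsXC : ∀ a : ℝ, (X + C a).roots = {-a} := by
    intro a
    rw [← sub_neg_eq_add, ← map_neg C]
    exact roots_X_sub_C _
  have hfroots : Multiset.card f.roots = s.card := by
    rw [hfdef, Polynomial.roots_prod _ _ (by rw [← hfdef]; exact hfne)]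
    rw [Multiset.card_bind]
    simp [hrootsXC]
  set g : ℝ[X] := (derivative^[c]) f with hgdef
  have hgdeg_le : g.natDegree ≤ m + 1 := by
    have h := Polynomial.natDegree_iterate_derivative f c
    rw [← hgdef] at h
    omega
  have hgcard_ge : m + 1 ≤ Multiset.card g.roots := by
    have h := card_roots_iterate f c
    rw [← hgdef] at h
    omega
  have hgcard_le : Multiset.card g.roots ≤ g.natDegree := Polynomial.card_roots' g
  have hgdeg : g.natDegree = m + 1 := by omega
  have hgroots : Multiset.card g.roots = g.natDegree := by omega
  have hgne : g ≠ 0 := by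
    intro h
    rw [h] at hgcard_ge
    simp at hgcard_ge
  have hcoeff : ∀ j : ℕ, j + c ≤ s.card →
      g.coeff j = (((j + c).descFactorial c : ℕ) : ℝ) *
        (∑ t ∈ s.powersetCard (s.card - (j+c)), ∏ i ∈ t, x i) := by
    intro j hj
    rw [hgdef, Polynomial.coeff_iterate_derivative, hfdef,
      Finset.prod_X_add_C_coeff _ _ hj, nsmul_eq_mul]
  have hD0 : g.coeff 0 = ((c.descFactorial c : ℕ) : ℝ) * E0 := by
    rw [hcoeff 0 (by omega), show (0:ℕ)+c = c by omega, show s.card - c = m+1 by omega]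
  have hD1 : g.coeff 1 = (((1+c).descFactorial c : ℕ) : ℝ) * E1 := by
    rw [hcoeff 1 (by omega), show s.card - (1+c) = m by omega]
  have hD2 : g.coeff 2 = (((2+c).descFactorial c : ℕ) : ℝ) * E2 := by
    rw [hcoeff 2 (by omega), show s.card - (2+c) = m - 1 by omega]
  have hgz : ∀ z ∈ g.roots, z ≠ 0 := by
    intro z hz hz0
    have hroot : g.IsRoot z := ((Polynomial.mem_roots hgne).mp hz)
    rw [hz0] at hroot
    have hc0 : g.coeff 0 = 0 := by
      rw [Polynomial.coeff_zero_eq_eval_zero]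
      exact hroot
    rw [hD0] at hc0
    have hfacne : ((c.descFactorial c : ℕ) : ℝ) ≠ 0 := by
      rw [Nat.descFactorial_self]
      exact_mod_cast Nat.factorial_ne_zero c
    rcases mul_eq_zero.mp hc0 with h | h
    · exact hfacne h
    · exact hE0z h
  have hvieta : ∀ j : ℕ, j ≤ m + 1 →
      g.coeff j = g.leadingCoeff * (-1)^(m+1-j) * g.roots.esymm (m+1-j) := by
    intro j hj
    have h := Polynomial.coeff_eq_esymm_roots_of_card hgroots (k := j) (by omega)
    rwa [hgdeg] at h
  set L := g.leadingCoeff with hLdef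
  set e0 := g.roots.esymm (m+1) with he0
  set e1 := g.roots.esymm m with he1
  set e2 := g.roots.esymm (m-1) with he2
  have hv0 : ((c.descFactorial c : ℕ) : ℝ) * E0 = L * (-1)^(m+1) * e0 := by
    have h := hvieta 0 (by omega)
    simp only [Nat.sub_zero] at h
    rw [← hD0, h]
  have hv1 : (((1+c).descFactorial c : ℕ) : ℝ) * E1 = L * (-1)^m * e1 := by
    have h := hvieta 1 (by omega)
    rw [show m+1-1 = m by omega] at h
    rw [← hD1, h]
  have hv2 : (((2+c).descFactorial c : ℕ) : ℝ) * E2 = L * (-1)^(m-1) * e2 := by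
    have h := hvieta 2 (by omega)
    rw [show m+1-2 = m-1 by omega] at h
    rw [← hD2, h]
  have hedge : 2 * ((m:ℝ) + 1) * (e0 * e2) ≤ (m:ℝ) * e1 ^ 2 := by
    have hcard' : Multiset.card g.roots = m + 1 := by omega
    exact newton_edge g.roots hgz hm hcard'
  have hs2 : (-1:ℝ)^(m+1) * (-1)^(m-1) = 1 := by
    rw [← pow_add, show m+1+(m-1) = 2*m by omega, pow_mul]
    norm_num
  have hs1 : ((-1:ℝ)^m)^2 = 1 := by
    rw [← pow_mul, mul_comm m 2, pow_mul]
    norm_num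
  have key2 : 2 * ((m:ℝ)+1) * ((((c.descFactorial c : ℕ) : ℝ) * E0) *
        ((((2+c).descFactorial c : ℕ) : ℝ) * E2))
      ≤ (m:ℝ) * ((((1+c).descFactorial c : ℕ) : ℝ) * E1)^2 := by
    rw [hv0, hv1, hv2]
    have lhs_eq : 2 * ((m:ℝ)+1) * ((L * (-1)^(m+1) * e0) * (L * (-1)^(m-1) * e2))
        = L^2 * (2 * ((m:ℝ)+1) * (e0 * e2)) := by
      rw [show (L * (-1)^(m+1) * e0) * (L * (-1)^(m-1) * e2)
          = L^2 * ((-1:ℝ)^(m+1) * (-1)^(m-1)) * (e0 * e2) by ring, hs2]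
      ring
    have rhs_eq : (m:ℝ) * (L * (-1)^m * e1)^2 = L^2 * ((m:ℝ) * e1^2) := by
      rw [show (L * (-1)^m * e1)^2 = L^2 * ((-1:ℝ)^m)^2 * e1^2 by ring, hs1]
      ring
    rw [lhs_eq, rhs_eq]
    exact mul_le_mul_of_nonneg_left hedge (sq_nonneg L)
  -- natural number identities
  have n1 : ((1+c).descFactorial c)^2 = (c+1) * (c.factorial * (c+1).factorial) := by
    rw [show 1+c = c+1 by omega, descFactorial_succ_self, Nat.factorial_succ]
    ring
  have n2 : 2 * (c.descFactorial c * ((2+c).descFactorial c))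
      = (c+2) * (c.factorial * (c+1).factorial) := by
    rw [Nat.descFactorial_self, show 2+c = c+2 by omega]
    calc 2 * (c.factorial * ((c+2).descFactorial c))
        = c.factorial * (2 * ((c+2).descFactorial c)) := by ring
      _ = c.factorial * (c+2).factorial := by rw [two_mul_descFactorial]
      _ = c.factorial * ((c+2) * (c+1).factorial) := by rw [Nat.factorial_succ (c+1)]
      _ = (c+2) * (c.factorial * (c+1).factorial) := by ring
  have r1 : (((1+c).descFactorial c : ℕ) : ℝ)^2
      = ((c:ℝ)+1) * ((c.factorial : ℝ) * ((c+1).factorial : ℝ)) := by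
    have := congrArg (Nat.cast : ℕ → ℝ) n1
    push_cast at this
    convert this using 2 <;> push_cast <;> ring
  have r2 : 2 * (((c.descFactorial c : ℕ) : ℝ) * (((2+c).descFactorial c : ℕ) : ℝ))
      = ((c:ℝ)+2) * ((c.factorial : ℝ) * ((c+1).factorial : ℝ)) := by
    have := congrArg (Nat.cast : ℕ → ℝ) n2
    push_cast at this
    convert this using 2 <;> push_cast <;> ring
  set F : ℝ := (c.factorial : ℝ) * ((c+1).factorial : ℝ) with hFdef
  have hFpos : (0:ℝ) < F := by
    apply mul_pos <;> exact_mod_cast Nat.factorial_pos _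
  rw [← mul_le_mul_iff_of_pos_right hFpos]
  have lhs_eq : ((m:ℝ)+1) * ((c:ℝ)+2) * (E2 * E0) * F
      = 2 * ((m:ℝ)+1) * ((((c.descFactorial c : ℕ) : ℝ) * E0) *
        ((((2+c).descFactorial c : ℕ) : ℝ) * E2)) := by
    rw [hFdef] at *
    linear_combination (-((m:ℝ)+1) * (E2 * E0)) * r2
  have rhs_eq : (m:ℝ) * ((c:ℝ)+1) * E1^2 * F
      = (m:ℝ) * ((((1+c).descFactorial c : ℕ) : ℝ) * E1)^2 := by
    rw [hFdef] at *
    linear_combination (-(m:ℝ) * E1^2) * r1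
  rw [lhs_eq, rhs_eq]
  exact key2



noncomputable def Adel (n : ℕ) (lam : Fin n → ℝ) (i : Fin n) (j : ℕ) : ℝ :=
  ∑ t ∈ (Finset.univ.erase i).powersetCard j, ∏ l ∈ t, lam l

lemma Adel_zero (n : ℕ) (lam : Fin n → ℝ) (i : Fin n) : Adel n lam i 0 = 1 := by
  simp [Adel, Finset.powersetCard_zero]

lemma card_erase_univ (n : ℕ) (i : Fin n) :
    ((Finset.univ : Finset (Fin n)).erase i).card = n - 1 := by
  rw [Finset.card_erase_of_mem (Finset.mem_univ i), Finset.card_univ, Fintype.card_fin]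

lemma Adel_eq_zero {n : ℕ} (lam : Fin n → ℝ) (i : Fin n) {j : ℕ} (h : n - 1 < j) :
    Adel n lam i j = 0 := by
  rw [Adel, Finset.powersetCard_eq_empty.mpr (by rw [card_erase_univ]; exact h),
    Finset.sum_empty]

lemma esym_split' {ι : Type*} [DecidableEq ι] (s : Finset ι) (x : ι → ℝ) (i : ι)
    (hi : i ∈ s) (j : ℕ) :
    ∑ t ∈ s.powersetCard (j+1), ∏ l ∈ t, x l
    = x i * (∑ t ∈ (s.erase i).powersetCard j, ∏ l ∈ t, x l)
      + ∑ t ∈ (s.erase i).powersetCard (j+1), ∏ l ∈ t, x l := by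
  have hnot : i ∉ s.erase i := Finset.notMem_erase i s
  conv_lhs => rw [← Finset.insert_erase hi]
  rw [Finset.powersetCard_succ_insert hnot]
  have hdisj : Disjoint ((s.erase i).powersetCard (j+1))
      (Finset.image (insert i) ((s.erase i).powersetCard j)) := by
    rw [Finset.disjoint_left]
    intro t ht htim
    obtain ⟨u, _, rfl⟩ := Finset.mem_image.mp htim
    exact hnot ((Finset.mem_powersetCard.mp ht).1 (Finset.mem_insert_self i u))
  rw [Finset.sum_union hdisj]
  rw [Finset.sum_image (by
    intro u hu v hv huv
    have hiu : i ∉ u := fun h => hnot ((Finset.mem_powersetCard.mp hu).1 h)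
    have hiv : i ∉ v := fun h => hnot ((Finset.mem_powersetCard.mp hv).1 h)
    rw [← Finset.erase_insert hiu, ← Finset.erase_insert hiv, huv])]
  rw [add_comm]
  congr 1
  rw [Finset.mul_sum]
  apply Finset.sum_congr rfl
  intro t ht
  have hit : i ∉ t := fun h => hnot ((Finset.mem_powersetCard.mp ht).1 h)
  rw [Finset.prod_insert hit]

lemma esymmZ_nat (n : ℕ) (j : ℕ) (lam : Fin n → ℝ) :
    esymmZ n (j : ℤ) lam = ∑ t ∈ (Finset.univ : Finset (Fin n)).powersetCard j, ∏ l ∈ t, lam l := by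
  rw [esymmZ, if_neg (by omega), Int.toNat_natCast]

lemma esymmDel_nat (n : ℕ) (j : ℕ) (lam : Fin n → ℝ) (i : Fin n) :
    esymmDel n (j : ℤ) lam i = Adel n lam i j := by
  rw [esymmDel, if_neg (by omega), Int.toNat_natCast, Adel]

lemma esymmZ_split {n : ℕ} (lam : Fin n → ℝ) (i : Fin n) (j : ℕ) :
    esymmZ n ((j+1 : ℕ) : ℤ) lam = lam i * Adel n lam i j + Adel n lam i (j+1) := by
  rw [esymmZ_nat, esym_split' _ lam i (Finset.mem_univ i) j, Adel, Adel]

lemma newton_Adel {n : ℕ} (lam : Fin n → ℝ) (i : Fin n) (m c : ℕ) (hm : 1 ≤ m)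
    (hc : n - 1 = m + 1 + c) :
    ((m:ℝ)+1) * ((c:ℝ)+2) * (Adel n lam i (m-1) * Adel n lam i (m+1)) ≤
    (m:ℝ) * ((c:ℝ)+1) * (Adel n lam i m) ^ 2 :=
  newton_finset _ lam m c hm (by rw [card_erase_univ]; exact hc)

lemma Adel_pos {n k : ℕ} (hn : 2 ≤ n) (hk1 : 1 ≤ k) (hk : k ≤ n) (lam : Fin n → ℝ)
    (i : Fin n) (ht : 0 < lam i)
    (hσ : ∀ j : ℕ, 1 ≤ j → j ≤ k → 0 < esymmZ n (j : ℤ) lam) :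
    ∀ m : ℕ, m ≤ k - 1 → 0 < Adel n lam i m := by
  intro m
  induction m using Nat.strong_induction_on with
  | _ m ih =>
    intro hmk
    rcases Nat.eq_zero_or_pos m with rfl | hm1
    · rw [Adel_zero]; norm_num
    obtain ⟨mm, rfl⟩ : ∃ mm, m = mm + 1 := ⟨m - 1, by omega⟩
    set m := mm + 1
    by_contra hAm'
    push_neg at hAm'
    have hP : 0 < Adel n lam i mm := ih mm (by omega) (by omega)
    have hu : 0 < lam i * Adel n lam i mm + Adel n lam i m := by
      have h := hσ m (by omega) (by omega)
      rwa [show (m : ℕ) = mm + 1 from rfl, esymmZ_split lam i mm] at h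
    have hv : 0 < lam i * Adel n lam i m + Adel n lam i (m+1) := by
      have h := hσ (m+1) (by omega) (by omega)
      rwa [esymmZ_split lam i m] at h
    rcases le_or_gt (n-1) m with hbig | hsmall
    · -- m = n - 1 : top coefficient vanishes
      have hz : Adel n lam i (m+1) = 0 := Adel_eq_zero lam i (by omega)
      rw [hz, add_zero] at hv
      nlinarith [hv, ht, hAm']
    · obtain ⟨c, hc⟩ : ∃ c, n - 1 = m + 1 + c := ⟨n - 1 - (m+1), by omega⟩
      have hnewton := newton_Adel lam i m c (by omega) hc
      rw [show m - 1 = mm from rfl] at hnewton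
      have hγβ : (m:ℝ) * ((c:ℝ)+1) ≤ ((m:ℝ)+1) * ((c:ℝ)+2) := by
        have h1 : (0:ℝ) ≤ (m:ℝ) := Nat.cast_nonneg m
        have h2 : (0:ℝ) ≤ (c:ℝ) := Nat.cast_nonneg c
        nlinarith
      have hβpos : (0:ℝ) < ((m:ℝ)+1) * ((c:ℝ)+2) := by positivity
      nlinarith [hnewton, mul_pos hP hv, sq_nonneg (Adel n lam i m),
        mul_nonneg (neg_nonneg.mpr hAm') hu.le]

lemma Adel_chain {n k : ℕ} (hn : 2 ≤ n) (hk1 : 1 ≤ k) (hk : k ≤ n) (lam : Fin n → ℝ)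
    (i : Fin n) (ht : 0 < lam i)
    (hσ : ∀ j : ℕ, 1 ≤ j → j ≤ k → 0 < esymmZ n (j : ℤ) lam) :
    ∀ j : ℕ, 1 ≤ j → j ≤ k - 1 →
      Adel n lam i j ^ (j-1) ≤ Adel n lam i (j-1) ^ j := by
  intro j
  induction j with
  | zero => omega
  | succ j ihj =>
    intro _ hjk
    rcases Nat.eq_zero_or_pos j with rfl | hj1
    · simp [Adel_zero]
    have hApos := Adel_pos hn hk1 hk lam i ht hσ
    have hPm : 0 < Adel n lam i (j-1) := hApos (j-1) (by omega)
    have hQ : 0 < Adel n lam i j := hApos j (by omega)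
    have hR : 0 < Adel n lam i (j+1) := hApos (j+1) (by omega)
    obtain ⟨c, hc⟩ : ∃ c, n - 1 = j + 1 + c := ⟨n - 1 - (j+1), by omega⟩
    have hnewton := newton_Adel lam i j c hj1 hc
    have hγβ : (j:ℝ) * ((c:ℝ)+1) ≤ ((j:ℝ)+1) * ((c:ℝ)+2) := by
      have h1 : (0:ℝ) ≤ (j:ℝ) := Nat.cast_nonneg j
      have h2 : (0:ℝ) ≤ (c:ℝ) := Nat.cast_nonneg c
      nlinarith
    have hβpos : (0:ℝ) < ((j:ℝ)+1) * ((c:ℝ)+2) := by positivity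
    have hN : Adel n lam i (j-1) * Adel n lam i (j+1) ≤ Adel n lam i j ^ 2 := by
      nlinarith [hnewton, sq_nonneg (Adel n lam i j), mul_pos hPm hR]
    have hIH := ihj hj1 (by omega)
    -- (A_{j+1} * A_{j-1})^j ≤ (A_j^2)^j
    have h1 : (Adel n lam i (j+1) * Adel n lam i (j-1)) ^ j ≤ (Adel n lam i j ^ 2) ^ j := by
      apply pow_le_pow_left₀ (by positivity)
      rw [mul_comm]; exact hN
    rw [mul_pow, ← pow_mul] at h1
    have h2 : Adel n lam i j ^ (2 * j)
        = Adel n lam i j ^ (j+1) * Adel n lam i j ^ (j-1) := by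
      rw [← pow_add]; congr 1; omega
    rw [h2] at h1
    have h3 : Adel n lam i j ^ (j+1) * Adel n lam i j ^ (j-1)
        ≤ Adel n lam i j ^ (j+1) * Adel n lam i (j-1) ^ j := by
      apply mul_le_mul_of_nonneg_left hIH (by positivity)
    have h4 : Adel n lam i (j+1) ^ j * Adel n lam i (j-1) ^ j
        ≤ Adel n lam i j ^ (j+1) * Adel n lam i (j-1) ^ j := le_trans h1 h3
    have h5 : (0:ℝ) < Adel n lam i (j-1) ^ j := by positivity
    have := (mul_le_mul_iff_of_pos_right h5).mp h4
    simpa using this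


end SkAux

theorem Sk_gt_one_sub_eps_lam1_Sk11
    (n : ℕ) (hn : 2 ≤ n) (k : ℕ) (hk1 : 2 ≤ k) (hk : k ≤ n)
    (α : ℝ) (hα : 0 < α) (N₀ : ℝ) (hN₀ : 0 < N₀) :
    ∀ ε₀ : ℝ, 0 < ε₀ → ε₀ < 1 →
      ∃ Λ : ℝ, 0 < Λ ∧
        ∀ lam : Fin n → ℝ, lam ∈ Gamma n k → Antitone lam → SZ n α k lam ≤ N₀ →
          Λ ≤ lam ⟨0, by omega⟩ →
          SZ n α k lam >
            (1 - ε₀) * lam ⟨0, by omega⟩ * SDel n α ((k : ℤ) - 1) lam ⟨0, by omega⟩ := by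
  intro ε₀ hε₀ hε₁
  have hPpos : (0:ℝ) < (ε₀*α)^(k-2) := by positivity
  set P : ℝ := (ε₀*α)^(k-2) with hPdef
  refine ⟨1 + N₀/α + N₀/(α * P), by positivity, ?_⟩
  intro lam hGam hAnti hSk hΛ0
  set i0 : Fin n := ⟨0, by omega⟩ with hi0
  have hΛ : 1 + N₀/α + N₀/(α * P) ≤ lam i0 := hΛ0
  set t : ℝ := lam i0 with htdef
  have hΛpos : (0:ℝ) < 1 + N₀/α + N₀/(α * P) := by positivity
  have ht : 0 < t := lt_of_lt_of_le hΛpos hΛ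
  have hσ : ∀ j : ℕ, 1 ≤ j → j ≤ k → 0 < esymmZ n (j:ℤ) lam := fun j h1 h2 => hGam j h1 h2
  have hApos := SkAux.Adel_pos hn (by omega) hk lam i0 ht hσ
  set a : ℝ := SkAux.Adel n lam i0 (k-2) with hadef
  set b : ℝ := SkAux.Adel n lam i0 (k-1) with hbdef
  set c0 : ℝ := SkAux.Adel n lam i0 k with hc0def
  have ha : 0 < a := hApos (k-2) (by omega)
  have hb : 0 < b := hApos (k-1) (by omega)
  have eK : esymmZ n (k:ℤ) lam = t * b + c0 := by
    have h := SkAux.esymmZ_split lam i0 (k-1)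
    rwa [show (k-1)+1 = k by omega] at h
  have eK1 : esymmZ n ((k:ℤ)-1) lam = t * a + b := by
    have h := SkAux.esymmZ_split lam i0 (k-2)
    rw [show (k-2)+1 = k-1 by omega] at h
    rwa [show ((k-1:ℕ):ℤ) = (k:ℤ)-1 by omega] at h
  have hσk : 0 < t * b + c0 := by rw [← eK]; exact hσ k (by omega) le_rfl
  have dK1 : esymmDel n ((k:ℤ)-1) lam i0 = b := by
    rw [show (k:ℤ)-1 = ((k-1:ℕ):ℤ) by omega, SkAux.esymmDel_nat]
  have dK2 : esymmDel n ((k:ℤ)-1-1) lam i0 = a := by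
    rw [show (k:ℤ)-1-1 = ((k-2:ℕ):ℤ) by omega, SkAux.esymmDel_nat]
  have hSZ : SZ n α (k:ℤ) lam = (t*b + c0) + α * (t*a + b) := by
    rw [SZ, eK, eK1]
  have hSDel : SDel n α ((k:ℤ)-1) lam i0 = b + α * a := by
    rw [SDel, dK1, dK2]
  rw [hSZ] at hSk
  show SZ n α (k:ℤ) lam > (1 - ε₀) * t * SDel n α ((k:ℤ)-1) lam i0
  rw [hSZ, hSDel]
  -- bound: α * (t*a) < N₀
  have hta : α * (t*a) < N₀ := by nlinarith [mul_pos hα hb]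
  have hchain' : 3 ≤ k → b^(k-2) ≤ a^(k-1) := by
    intro hk3'
    have h := SkAux.Adel_chain hn (by omega) hk lam i0 ht hσ (k-1) (by omega) le_rfl
    rw [show k-1-1 = k-2 by omega] at h
    exact h
  clear_value t a b c0 P
  rcases eq_or_lt_of_le hk1 with heq | hk3
  · -- k = 2 : contradiction with t large
    exfalso
    have hP1 : P = 1 := by rw [hPdef, show k-2 = 0 by omega, pow_zero]
    have ha1 : a = 1 := by rw [hadef, show k-2 = 0 by omega, SkAux.Adel_zero]
    rw [ha1, mul_one] at hta
    have hd1 : α * (N₀/α) = N₀ := by field_simp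
    have hd2 : α * (N₀/(α*P)) = N₀ := by rw [hP1]; field_simp
    nlinarith [mul_le_mul_of_nonneg_left hΛ hα.le]
  · -- k ≥ 3
    have hk3' : 3 ≤ k := hk3
    have hchain := hchain' hk3'
    -- hchain : b ^ (k-2) ≤ a ^ (k-1)
    have key2 : N₀ ≤ α * (1 + N₀/α + N₀/(α * P)) * P := by
      have h1 : α * (1 + N₀/α + N₀/(α * P)) * P = α*P + N₀*P + N₀ := by
        field_simp
      rw [h1]
      nlinarith [mul_pos hα hPpos, mul_pos hN₀ hPpos]
    have haP : a < P := by
      have h5 : α*t*P ≥ α*(1 + N₀/α + N₀/(α * P))*P := by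
        have := mul_le_mul_of_nonneg_right (mul_le_mul_of_nonneg_left hΛ hα.le)
          hPpos.le
        linarith
      have h6 : α*t*a < α*t*P := by linarith [hta, key2, h5]
      exact lt_of_mul_lt_mul_left (by linarith [h6]) (mul_pos hα ht).le
    have hpow : b^(k-2) ≤ (ε₀*α*a)^(k-2) := by
      have h7 : a^(k-1) = a^(k-2) * a := by
        rw [show k-1 = (k-2)+1 by omega, pow_succ]
      have h8 : a^(k-2) * a ≤ a^(k-2) * P := by
        apply mul_le_mul_of_nonneg_left haP.le (by positivity)
      have h9 : a^(k-2) * P = (ε₀*α*a)^(k-2) := by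
        rw [hPdef, ← mul_pow]
        ring_nf
      calc b^(k-2) ≤ a^(k-1) := hchain
        _ = a^(k-2) * a := h7
        _ ≤ a^(k-2) * P := h8
        _ = (ε₀*α*a)^(k-2) := h9
    have hbP : b ≤ ε₀*α*a :=
      le_of_pow_le_pow_left₀ (by omega) (by positivity) hpow
    have h1 : t*b ≤ t*(ε₀*α*a) := mul_le_mul_of_nonneg_left hbP ht.le
    have h2 : 0 < α*b := mul_pos hα hb
    have h3 : 0 < ε₀*(t*b) := mul_pos hε₀ (mul_pos ht hb)
    nlinarith only [hσk, h1, h2, h3]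
end
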